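/- Let P ⊆ [0,1]^n be a closed convex set and let P_I = conv(P ∩ {0,1}^n) be its integer hull. Suppose P_I is full-dimensional, let F = {x ∈ P_I : cᵀx = c₀} be a facet of P_I, and let Q ⊆ [0,1]^n be a compact convex set with P_I ⊆ Q and such that the inequality cᵀx ≤ c₀ is not valid for Q. Then the relative interior of F is contained in the interior of Q. -/

import Mathlib

open Set

set_option maxHeartbeats 1000000 in
/-- Let `P ⊆ [0,1]^n` be closed and convex, let `P_I` be its integer hull (the convex hull
of its 0/1 points), assumed full-dimensional, and let `F = {x ∈ P_I : cᵀx = c₀}` be a facet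
of `P_I` (the inequality `cᵀx ≤ c₀` is valid for `P_I` and `F` has dimension `n - 1`).
If `Q ⊆ [0,1]^n` is a compact convex set containing `P_I` for which `cᵀx ≤ c₀` is not
valid, then the relative interior of `F` is contained in the interior of `Q`. -/
theorem relint_facet_subset_interior (n : ℕ) (P : Set (Fin n → ℝ))
    (hPc : IsClosed P) (hPconv : Convex ℝ P) (hPbox : P ⊆ Set.Icc 0 1)
    (c : Fin n → ℝ) (c₀ : ℝ)
    (PI : Set (Fin n → ℝ)) (hPI : PI = convexHull ℝ {x ∈ P | ∀ i, x i = 0 ∨ x i = 1})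
    (hfull : (interior PI).Nonempty)
    (F : Set (Fin n → ℝ)) (hF : F = {x ∈ PI | ∑ i, c i * x i = c₀})
    (hvalid : ∀ x ∈ PI, ∑ i, c i * x i ≤ c₀)
    (hfacet : Module.finrank ℝ (affineSpan ℝ F).direction = n - 1)
    (Q : Set (Fin n → ℝ)) (hQc : IsCompact Q) (hQconv : Convex ℝ Q)
    (hQbox : Q ⊆ Set.Icc 0 1) (hPIQ : PI ⊆ Q)
    (hnotvalid : ∃ x ∈ Q, c₀ < ∑ i, c i * x i) :
    intrinsicInterior ℝ F ⊆ interior Q := by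
  intro x hx
  have hFsub : F ⊆ PI := by rw [hF]; exact fun w hw => hw.1
  have hxF : x ∈ F := intrinsicInterior_subset hx
  have hxPI : x ∈ PI := hFsub hxF
  obtain ⟨y, hyQ, hyc⟩ := hnotvalid
  -- the linear functional
  let fL : (Fin n → ℝ) →ₗ[ℝ] ℝ :=
    { toFun := fun w => ∑ i, c i * w i
      map_add' := fun u v => by
        simp only [Pi.add_apply, mul_add, Finset.sum_add_distrib]
      map_smul' := fun a u => by
        simp only [Pi.smul_apply, smul_eq_mul, RingHom.id_apply, Finset.mul_sum]
        exact Finset.sum_congr rfl fun i _ => by ring }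
  have hfL : ∀ w, fL w = ∑ i, c i * w i := fun w => rfl
  have hxc : fL x = c₀ := by rw [hF] at hxF; exact hxF.2
  -- c is nonzero
  have hc0 : c ≠ 0 := by
    rintro rfl
    simp only [Pi.zero_apply, zero_mul, Finset.sum_const_zero] at hyc
    have := hvalid x hxPI
    simp only [Pi.zero_apply, zero_mul, Finset.sum_const_zero] at this
    linarith
  obtain ⟨i0, hi0⟩ : ∃ i, c i ≠ 0 := by
    by_contra h; push_neg at h; exact hc0 (funext h)
  -- rank of the kernel
  have hrange : LinearMap.range fL = ⊤ := by
    rw [LinearMap.range_eq_top]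
    intro s
    refine ⟨Pi.single i0 (s / c i0), ?_⟩
    rw [hfL, Finset.sum_eq_single i0]
    · rw [Pi.single_eq_same]; field_simp
    · intro j _ hj; rw [Pi.single_eq_of_ne hj, mul_zero]
    · intro h; exact absurd (Finset.mem_univ i0) h
  have hker : Module.finrank ℝ (LinearMap.ker fL) = n - 1 := by
    have h1 := LinearMap.finrank_range_add_finrank_ker fL
    rw [hrange, finrank_top, Module.finrank_self, Module.finrank_fin_fun] at h1
    omega
  -- the affine span of F is the hyperplane
  have hspan_le : affineSpan ℝ F ≤ AffineSubspace.mk' x (LinearMap.ker fL) := by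
    rw [affineSpan_le]
    intro w hw
    have hwc : fL w = c₀ := by rw [hF] at hw; exact hw.2
    show w ∈ AffineSubspace.mk' x (LinearMap.ker fL)
    rw [AffineSubspace.mem_mk', vsub_eq_sub, LinearMap.mem_ker, map_sub,
      hwc, hxc, sub_self]
  have hdir : (affineSpan ℝ F).direction = LinearMap.ker fL := by
    apply Submodule.eq_of_le_of_finrank_eq
    · have := AffineSubspace.direction_le hspan_le
      rwa [AffineSubspace.direction_mk'] at this
    · rw [hfacet, hker]
  have hspan_eq : affineSpan ℝ F = AffineSubspace.mk' x (LinearMap.ker fL) := by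
    apply AffineSubspace.ext_of_direction_eq
    · rw [hdir, AffineSubspace.direction_mk']
    · exact ⟨x, mem_affineSpan ℝ hxF, AffineSubspace.self_mem_mk' x _⟩
  -- extract a relative ball around x
  have hball : ∃ ε > 0, ∀ w, fL w = c₀ → dist w x < ε → w ∈ F := by
    have hx2 := hx
    rw [intrinsicInterior] at hx2
    obtain ⟨x', hx', hxv⟩ := hx2
    rw [mem_interior_iff_mem_nhds, Metric.mem_nhds_iff] at hx'
    obtain ⟨ε, hε, hsub⟩ := hx'
    refine ⟨ε, hε, fun w hwc hd => ?_⟩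
    have hw : w ∈ affineSpan ℝ F := by
      rw [hspan_eq, AffineSubspace.mem_mk', vsub_eq_sub, LinearMap.mem_ker,
        map_sub, hwc, hxc, sub_self]
    have : (⟨w, hw⟩ : affineSpan ℝ F) ∈ Metric.ball x' ε := by
      rw [Metric.mem_ball, Subtype.dist_eq, hxv]
      exact hd
    exact hsub this
  obtain ⟨ε, hε, hballF⟩ := hball
  -- an interior point of PI with strict inequality
  obtain ⟨z, hzI⟩ := hfull
  have hzQ : z ∈ interior Q := interior_mono hPIQ hzI
  have hzlt : fL z < c₀ := by
    rcases lt_or_eq_of_le (hvalid z (interior_subset hzI)) with h | h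
    · exact h
    · exfalso
      obtain ⟨ρ, hρ, hsub⟩ := Metric.isOpen_iff.1 isOpen_interior z hzI
      have hcnorm : (0:ℝ) < ‖c‖ := norm_pos_iff.2 hc0
      set t := ρ / (2 * ‖c‖) with ht_def
      have ht : 0 < t := by positivity
      have hmem : z + t • c ∈ PI := by
        apply interior_subset
        apply hsub
        rw [Metric.mem_ball, dist_self_add_left, norm_smul, Real.norm_of_nonneg ht.le]
        have : t * ‖c‖ = ρ / 2 := by rw [ht_def]; field_simp
        rw [this]; linarith
      have hval := hvalid _ hmem
      have hcc : fL c = ∑ i, (c i)^2 := by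
        rw [hfL]
        exact Finset.sum_congr rfl fun i _ => by ring
      have hsum : fL (z + t • c) = fL z + t * ∑ i, (c i)^2 := by
        rw [map_add, map_smul, smul_eq_mul, hcc]
      have hpos : (0:ℝ) < ∑ i, (c i)^2 :=
        Finset.sum_pos' (fun i _ => sq_nonneg _)
          ⟨i0, Finset.mem_univ i0, lt_of_le_of_ne (sq_nonneg _) (Ne.symm (pow_ne_zero 2 hi0))⟩
      have h' : fL z = c₀ := h
      rw [← hfL, hsum, h'] at hval
      nlinarith
  -- set up the construction
  have hyc' : c₀ < fL y := hyc
  obtain ⟨a, ha⟩ : ∃ v : ℝ, v = fL y - c₀ := ⟨_, rfl⟩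
  obtain ⟨b, hb⟩ : ∃ v : ℝ, v = c₀ - fL z := ⟨_, rfl⟩
  have hapos : 0 < a := by rw [ha]; linarith
  have hbpos : 0 < b := by rw [hb]; linarith
  obtain ⟨B, hB⟩ : ∃ v : ℝ, v = b / a := ⟨_, rfl⟩
  have hBpos : 0 < B := by rw [hB]; exact div_pos hbpos hapos
  have hBa : B * a = b := by rw [hB]; exact div_mul_cancel₀ b (ne_of_gt hapos)
  obtain ⟨C, hC⟩ : ∃ v : ℝ, v = ‖x - z‖ + B * ‖y - x‖ + 1 := ⟨_, rfl⟩
  have hCpos : 0 < C := by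
    rw [hC]
    have h1 := norm_nonneg (x - z)
    have h2 := mul_nonneg hBpos.le (norm_nonneg (y - x))
    linarith
  obtain ⟨θ, hθ_def⟩ : ∃ v : ℝ, v = min (1 / (2 * B)) (ε / (2 * C)) := ⟨_, rfl⟩
  have hθ : 0 < θ := by
    rw [hθ_def]
    exact lt_min (div_pos one_pos (by linarith)) (div_pos hε (by linarith))
  obtain ⟨lam, hlam⟩ : ∃ v : ℝ, v = θ * B := ⟨_, rfl⟩
  have hlam_pos : 0 < lam := by rw [hlam]; exact mul_pos hθ hBpos
  have hlam_le : lam ≤ 1 / 2 := by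
    have h1 : θ ≤ 1 / (2 * B) := hθ_def ▸ min_le_left _ _
    have h2 : (1 / (2 * B)) * B = 1 / 2 := by field_simp
    calc lam = θ * B := hlam
      _ ≤ (1 / (2 * B)) * B := mul_le_mul_of_nonneg_right h1 hBpos.le
      _ = 1 / 2 := h2
  have h1lam_pos : 0 < 1 - lam := by linarith
  have h1lam : (1 : ℝ) - lam ≠ 0 := ne_of_gt h1lam_pos
  obtain ⟨r, hr⟩ : ∃ v : Fin n → ℝ, v = x + θ • (x - z) := ⟨_, rfl⟩
  obtain ⟨w', hw'⟩ : ∃ v : Fin n → ℝ, v = (1 - lam)⁻¹ • (r - lam • y) := ⟨_, rfl⟩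
  -- value of fL at r
  have hfr : fL r = c₀ + θ * b := by
    rw [hr, map_add, map_smul, map_sub, smul_eq_mul, hxc, hb]
  -- value at w'
  have hfw' : fL w' = c₀ := by
    have hfy : fL y = c₀ + a := by rw [ha]; ring
    have hlama : lam * a = θ * b := by rw [hlam, mul_assoc, hBa]
    have hcalc : c₀ + θ * b - lam * (c₀ + a) = (1 - lam) * c₀ := by
      rw [mul_add, hlama]; ring
    rw [hw', map_smul, map_sub, map_smul, smul_eq_mul, smul_eq_mul, hfr, hfy, hcalc,
      inv_mul_cancel_left₀ h1lam]
  -- difference w' - x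
  have hkey : (1 - lam) • (w' - x) = θ • (x - z) - lam • (y - x) := by
    rw [hw', smul_sub, smul_smul, mul_inv_cancel₀ h1lam, one_smul, hr]
    module
  have hwx : w' - x = (1 - lam)⁻¹ • (θ • (x - z) - lam • (y - x)) := by
    rw [← hkey, smul_smul, inv_mul_cancel₀ h1lam, one_smul]
  -- norm bound
  have hnorm : ‖w' - x‖ < ε := by
    have hθε : θ ≤ ε / (2 * C) := hθ_def ▸ min_le_right _ _
    have h1 : ‖θ • (x - z) - lam • (y - x)‖ ≤ θ * ‖x - z‖ + lam * ‖y - x‖ := by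
      calc ‖θ • (x - z) - lam • (y - x)‖ ≤ ‖θ • (x - z)‖ + ‖lam • (y - x)‖ :=
            norm_sub_le _ _
        _ = θ * ‖x - z‖ + lam * ‖y - x‖ := by
            rw [norm_smul, norm_smul, Real.norm_of_nonneg hθ.le,
              Real.norm_of_nonneg hlam_pos.le]
    have h2 : (1 - lam)⁻¹ ≤ 2 := by
      rw [← one_div, one_div_le h1lam_pos (by norm_num : (0:ℝ) < 2)]
      linarith
    have h3 : ‖w' - x‖ ≤ (1 - lam)⁻¹ * (θ * ‖x - z‖ + lam * ‖y - x‖) := by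
      rw [hwx, norm_smul, Real.norm_of_nonneg (le_of_lt (inv_pos.2 h1lam_pos))]
      exact mul_le_mul_of_nonneg_left h1 (le_of_lt (inv_pos.2 h1lam_pos))
    have h4 : θ * ‖x - z‖ + lam * ‖y - x‖ = θ * (C - 1) := by
      rw [hlam, hC]; ring
    have h5 : ‖w' - x‖ ≤ 2 * (θ * (C - 1)) := by
      rw [← h4]
      refine h3.trans (mul_le_mul_of_nonneg_right h2 ?_)
      have h6 := mul_nonneg hθ.le (norm_nonneg (x - z))
      have h7 := mul_nonneg hlam_pos.le (norm_nonneg (y - x))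
      linarith
    have h6 : 2 * (θ * (C - 1)) < ε := by
      have h7 : θ * C ≤ (ε / (2 * C)) * C := mul_le_mul_of_nonneg_right hθε hCpos.le
      have h8 : (ε / (2 * C)) * C = ε / 2 := by field_simp
      nlinarith
    linarith
  -- w' belongs to F, hence to Q
  have hw'F : w' ∈ F := hballF w' hfw' (by rw [dist_eq_norm]; exact hnorm)
  have hw'Q : w' ∈ Q := hPIQ (hFsub hw'F)
  -- r is a convex combination of y and w', hence in Q
  have hrQ : r ∈ Q := by
    have hrcomb : r = lam • y + (1 - lam) • w' := by
      rw [hw', smul_smul, mul_inv_cancel₀ h1lam, one_smul]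
      abel
    rw [hrcomb]
    exact hQconv hyQ hw'Q hlam_pos.le h1lam_pos.le (by ring)
  -- x is a strict convex combination of z (interior) and r
  have h1θ : (1 : ℝ) + θ ≠ 0 := by linarith
  have hx_eq : x = (θ / (1 + θ)) • z + (1 / (1 + θ)) • r := by
    rw [hr]
    match_scalars <;> field_simp <;> ring
  rw [hx_eq]
  exact hQconv.combo_interior_closure_mem_interior hzQ (subset_closure hrQ)
    (div_pos hθ (by linarith)) (le_of_lt (div_pos one_pos (by linarith)))
    (by field_simp; ring)
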